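/- Let z ≥ 2 be an integer, K = ⌊log z / log 2⌋, and for each 2 ≤ k ≤ K let y_k be the unique positive real solution of y + y² + ⋯ + y^k = z. Then ∑_{k=1}^{K} θ(y_k) > ψ(z) − (log z)(log log z) for z sufficiently large, where y₁ = z and θ, ψ are the Chebyshev functions. -/

import Mathlib

/-- The first Chebyshev function `θ(x) = ∑_{p ≤ x} log p`. -/
noncomputable def chebyshevTheta (x : ℝ) : ℝ :=
  ∑ p ∈ Nat.primesBelow (⌊x⌋₊ + 1), Real.log p

/-- The second Chebyshev function `ψ(x) = ∑_{n ≤ x} Λ(n)`. -/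
noncomputable def chebyshevPsi (x : ℝ) : ℝ :=
  ∑ n ∈ Finset.Icc 1 ⌊x⌋₊, ArithmeticFunction.vonMangoldt n

section Aux

lemma theta_diff_le {x y : ℝ} (hx1 : 1 ≤ x) (hyx : y ≤ x) (hxy : x - 1 < y) :
    chebyshevTheta x ≤ chebyshevTheta y + Real.log x := by
  have hy0 : 0 ≤ y := by linarith
  have hsub : Nat.primesBelow (⌊y⌋₊ + 1) ⊆ Nat.primesBelow (⌊x⌋₊ + 1) := by
    intro p hp
    rw [Nat.mem_primesBelow] at hp ⊢
    exact ⟨lt_of_lt_of_le hp.1 (by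
      have := Nat.floor_le_floor (R := ℝ) hyx
      omega), hp.2⟩
  have hsplit : chebyshevTheta x = chebyshevTheta y +
      ∑ p ∈ Nat.primesBelow (⌊x⌋₊ + 1) \ Nat.primesBelow (⌊y⌋₊ + 1), Real.log p := by
    rw [chebyshevTheta, chebyshevTheta, ← Finset.sum_sdiff hsub, add_comm]
  rw [hsplit]
  gcongr
  have hdsub : Nat.primesBelow (⌊x⌋₊ + 1) \ Nat.primesBelow (⌊y⌋₊ + 1) ⊆ {⌊x⌋₊} := by
    intro p hp
    rw [Finset.mem_sdiff, Nat.mem_primesBelow, Nat.mem_primesBelow] at hp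
    have hple : p ≤ ⌊x⌋₊ := by omega
    have hpgt : ⌊y⌋₊ + 1 ≤ p := by
      rcases hp with ⟨⟨h1, h2⟩, h3⟩
      by_contra hc
      exact h3 ⟨by omega, h2⟩
    have hpy : y < (p : ℝ) := by
      calc y < (⌊y⌋₊ + 1 : ℕ) := by push_cast; exact Nat.lt_floor_add_one y
      _ ≤ (p : ℝ) := by exact_mod_cast Nat.cast_le.mpr hpgt
    have hxp : x < (p : ℝ) + 1 := by linarith
    have : ⌊x⌋₊ ≤ p := by
      have := Nat.floor_le (le_trans (by norm_num) hx1 : (0:ℝ) ≤ x)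
      have : (⌊x⌋₊ : ℝ) < (p:ℝ) + 1 := lt_of_le_of_lt this hxp
      exact_mod_cast Nat.lt_add_one_iff.mp (by exact_mod_cast this)
    simp [le_antisymm hple this]
  calc ∑ p ∈ Nat.primesBelow (⌊x⌋₊ + 1) \ Nat.primesBelow (⌊y⌋₊ + 1), Real.log p
      ≤ ∑ p ∈ ({⌊x⌋₊} : Finset ℕ), Real.log p := by
        apply Finset.sum_le_sum_of_subset_of_nonneg hdsub
        intro p hp _
        exact Real.log_natCast_nonneg p
    _ = Real.log (⌊x⌋₊ : ℝ) := Finset.sum_singleton _ _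
    _ ≤ Real.log x := by
        apply Real.log_le_log (by exact_mod_cast Nat.floor_pos.mpr hx1)
        exact Nat.floor_le (by linarith)

lemma mem_primesBelow_rpow {z p k : ℕ} (hz : 1 ≤ z) (hk : 1 ≤ k) :
    p ∈ Nat.primesBelow (⌊(z:ℝ) ^ (1/(k:ℝ))⌋₊ + 1) ↔ p.Prime ∧ p ^ k ≤ z := by
  have hk0 : (k:ℝ) ≠ 0 := by positivity
  have hz0 : (0:ℝ) ≤ z := by positivity
  have hxnn : (0:ℝ) ≤ (z:ℝ) ^ (1/(k:ℝ)) := Real.rpow_nonneg hz0 _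
  rw [Nat.mem_primesBelow]
  constructor
  · rintro ⟨hlt, hp⟩
    refine ⟨hp, ?_⟩
    have h1 : (p:ℝ) ≤ (z:ℝ) ^ (1/(k:ℝ)) := by
      have : p ≤ ⌊(z:ℝ) ^ (1/(k:ℝ))⌋₊ := by omega
      calc (p:ℝ) ≤ (⌊(z:ℝ) ^ (1/(k:ℝ))⌋₊ : ℝ) := by exact_mod_cast this
        _ ≤ _ := Nat.floor_le hxnn
    have h2 : ((p:ℝ)) ^ k ≤ ((z:ℝ) ^ (1/(k:ℝ))) ^ k :=
      pow_le_pow_left₀ (by positivity) h1 k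
    rw [← Real.rpow_natCast ((z:ℝ) ^ (1/(k:ℝ))) k, ← Real.rpow_mul hz0,
      one_div, inv_mul_cancel₀ hk0, Real.rpow_one] at h2
    exact_mod_cast h2
  · rintro ⟨hp, hle⟩
    refine ⟨?_, hp⟩
    have h1 : ((p:ℝ)) ^ k ≤ (z:ℝ) := by exact_mod_cast hle
    have h2 : (p:ℝ) ≤ (z:ℝ) ^ (1/(k:ℝ)) := by
      have := Real.rpow_le_rpow (by positivity) h1 (by positivity : (0:ℝ) ≤ 1/(k:ℝ))
      rwa [← Real.rpow_natCast (p:ℝ) k, ← Real.rpow_mul (by positivity),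
        mul_one_div, div_self hk0, Real.rpow_one] at this
    have : p ≤ ⌊(z:ℝ) ^ (1/(k:ℝ))⌋₊ := Nat.le_floor h2
    omega

lemma psi_eq_sum_theta (z : ℕ) (hz : 2 ≤ z) :
    chebyshevPsi z = ∑ k ∈ Finset.Icc 1 ⌊Real.log z / Real.log 2⌋₊,
      chebyshevTheta ((z:ℝ) ^ (1/(k:ℝ))) := by
  classical
  set K := ⌊Real.log z / Real.log 2⌋₊ with hK
  have hlog2 : (0:ℝ) < Real.log 2 := Real.log_pos (by norm_num)
  have hz1 : 1 ≤ z := by omega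
  rw [chebyshevPsi, Nat.floor_natCast]
  rw [← Finset.sum_filter_of_ne (p := fun n => IsPrimePow n)
    (f := fun n => ArithmeticFunction.vonMangoldt n)
    (by intro n _ hn; exact ArithmeticFunction.vonMangoldt_ne_zero_iff.mp hn)]
  simp only [chebyshevTheta]
  rw [Finset.sum_sigma' (Finset.Icc 1 K)
    (fun k => Nat.primesBelow (⌊(z:ℝ) ^ (1/(k:ℝ))⌋₊ + 1)) (fun k p => Real.log p)]
  symm
  · apply Finset.sum_nbij (i := fun s => s.2 ^ s.1)
    · rintro ⟨k, p⟩ hs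
      rw [Finset.mem_sigma] at hs
      obtain ⟨hkmem, hpmem⟩ := hs
      rw [Finset.mem_Icc] at hkmem
      rw [mem_primesBelow_rpow hz1 hkmem.1] at hpmem
      rw [Finset.mem_filter, Finset.mem_Icc]
      exact ⟨⟨Nat.one_le_iff_ne_zero.mpr (pow_ne_zero _ hpmem.1.pos.ne'), hpmem.2⟩,
        hpmem.1.prime.isPrimePow.pow (by omega)⟩
    · rintro ⟨k, p⟩ hs ⟨j, q⟩ ht h
      simp only at h
      rw [Finset.mem_coe, Finset.mem_sigma] at hs ht
      obtain ⟨hk, hp⟩ := hs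
      obtain ⟨hj, hq⟩ := ht
      rw [Finset.mem_Icc] at hk hj
      rw [mem_primesBelow_rpow hz1 hk.1] at hp
      rw [mem_primesBelow_rpow hz1 hj.1] at hq
      have hpq : p = q := by
        have hdvd : p ∣ q ^ j := h ▸ dvd_pow_self p (Nat.one_le_iff_ne_zero.mp hk.1)
        exact (Nat.prime_dvd_prime_iff_eq hp.1 hq.1).mp (hp.1.dvd_of_dvd_pow hdvd)
      subst hpq
      have : k = j := Nat.pow_right_injective hp.1.two_le h
      simp [this]
    · intro n hn
      rw [Finset.mem_coe, Finset.mem_filter, Finset.mem_Icc] at hn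
      obtain ⟨⟨hn1, hnz⟩, hpp⟩ := hn
      obtain ⟨p, k, hp, hk, rfl⟩ := hpp
      rw [← Nat.prime_iff] at hp
      refine ⟨⟨k, p⟩, ?_, rfl⟩
      rw [Finset.mem_coe, Finset.mem_sigma, Finset.mem_Icc, mem_primesBelow_rpow hz1 hk]
      have h2k : 2 ^ k ≤ z := le_trans (Nat.pow_le_pow_left hp.two_le k) hnz
      have hkK : k ≤ K := by
        rw [hK]
        apply Nat.le_floor
        rw [le_div_iff₀ hlog2]
        calc (k:ℝ) * Real.log 2 = Real.log ((2:ℝ) ^ k) := by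
              rw [Real.log_pow]
          _ ≤ Real.log z := Real.log_le_log (by positivity) (by exact_mod_cast h2k)
      exact ⟨⟨hk, hkK⟩, hp, hnz⟩
    · rintro ⟨k, p⟩ hs
      rw [Finset.mem_sigma] at hs
      obtain ⟨hkmem, hpmem⟩ := hs
      rw [Finset.mem_Icc] at hkmem
      rw [mem_primesBelow_rpow hz1 hkmem.1] at hpmem
      rw [ArithmeticFunction.vonMangoldt_apply_pow (by omega),
        ArithmeticFunction.vonMangoldt_apply_prime hpmem.1]

lemma y_le_x {z : ℕ} {k : ℕ} {y : ℝ} (hk : 1 ≤ k) (hy0 : 0 < y)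
    (hy : ∑ i ∈ Finset.Icc 1 k, y ^ i = (z : ℝ)) : y ≤ (z:ℝ) ^ (1/(k:ℝ)) := by
  have hk0 : (k:ℝ) ≠ 0 := by positivity
  have hyk : y ^ k ≤ (z:ℝ) := by
    rw [← hy]
    exact Finset.single_le_sum (f := fun i => y ^ i)
      (fun i _ => le_of_lt (pow_pos hy0 i)) (Finset.mem_Icc.mpr ⟨hk, le_refl k⟩)
  calc y = (y ^ k) ^ (1/(k:ℝ)) := by
        rw [← Real.rpow_natCast y k, ← Real.rpow_mul hy0.le, mul_one_div, div_self hk0,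
          Real.rpow_one]
    _ ≤ (z:ℝ) ^ (1/(k:ℝ)) := Real.rpow_le_rpow (by positivity) hyk (by positivity)

lemma x_lt_y {z : ℕ} {k : ℕ} {y : ℝ} (hz : 1 ≤ z) (hk : 1 ≤ k) (hy0 : 0 < y)
    (hy : ∑ i ∈ Finset.Icc 1 k, y ^ i = (z : ℝ)) : (z:ℝ) ^ (1/(k:ℝ)) - 1 < y := by
  set x : ℝ := (z:ℝ) ^ (1/(k:ℝ)) with hxdef
  have hk0 : (k:ℝ) ≠ 0 := by positivity
  have hx1 : 1 ≤ x := Real.one_le_rpow (by exact_mod_cast hz) (by positivity)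
  have hxk : x ^ k = (z:ℝ) := by
    rw [hxdef, ← Real.rpow_natCast _ k, ← Real.rpow_mul (by positivity), one_div,
      inv_mul_cancel₀ hk0, Real.rpow_one]
  by_contra hc
  push_neg at hc
  have hb : ∑ i ∈ Finset.Icc 1 k, y ^ i ≤ ∑ i ∈ Finset.Icc 1 k, (x - 1) ^ i :=
    Finset.sum_le_sum (fun i _ => pow_le_pow_left₀ hy0.le hc i)
  have hbin : 1 + ∑ i ∈ Finset.Icc 1 k, (x - 1) ^ i ≤ x ^ k := by
    have hexp : x ^ k = ∑ i ∈ Finset.range (k + 1), (x - 1) ^ i * (k.choose i) := by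
      have := add_pow (x - 1) 1 k
      simpa using this
    rw [hexp]
    have hstep : ∀ i ∈ Finset.range (k+1), (x-1)^i ≤ (x-1)^i * (k.choose i) := by
      intro i hi
      rw [Finset.mem_range] at hi
      have h1 : (1:ℝ) ≤ (k.choose i : ℝ) := by
        exact_mod_cast Nat.succ_le_of_lt (Nat.choose_pos (by omega : i ≤ k))
      exact le_mul_of_one_le_right (pow_nonneg (by linarith) i) h1
    calc 1 + ∑ i ∈ Finset.Icc 1 k, (x - 1) ^ i
        = ∑ i ∈ Finset.range (k+1), (x-1)^i := by
          have hins : Finset.range (k+1) = insert 0 (Finset.Icc 1 k) := by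
            ext i; simp only [Finset.mem_range, Finset.mem_insert, Finset.mem_Icc]; omega
          rw [hins, Finset.sum_insert (by simp), pow_zero]
      _ ≤ _ := Finset.sum_le_sum hstep
  rw [hy, hxk] at *
  linarith [hb, hbin]

lemma harmonic_tail (K : ℕ) (hK : 16 ≤ K) :
    ∑ k ∈ Finset.Icc (2:ℕ) K, (1:ℝ)/k ≤
      (∑ k ∈ Finset.Icc (2:ℕ) 16, (1:ℝ)/k) + (Real.log K - Real.log 16) := by
  induction K, hK using Nat.le_induction with
  | base => simp
  | succ n hn ih =>
    rw [Finset.sum_Icc_succ_top (by omega : 2 ≤ n + 1)]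
    have hn0 : (0:ℝ) < n := by positivity
    have hkey : (1:ℝ)/((n:ℝ)+1) ≤ Real.log ((n:ℝ)+1) - Real.log n := by
      have h1 : Real.log ((n:ℝ)/((n:ℝ)+1)) ≤ (n:ℝ)/((n:ℝ)+1) - 1 :=
        Real.log_le_sub_one_of_pos (by positivity)
      rw [Real.log_div (by positivity) (by positivity)] at h1
      have h2 : (n:ℝ)/((n:ℝ)+1) - 1 = -(1/((n:ℝ)+1)) := by field_simp; ring
      rw [h2] at h1
      linarith
    have hc : ((n + 1 : ℕ) : ℝ) = (n:ℝ) + 1 := by push_cast; ring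
    rw [hc]
    linarith

lemma numeric_key :
    (∑ k ∈ Finset.Icc (2:ℕ) 16, (1:ℝ)/k) < 4 * Real.log 2 + Real.log (Real.log 2) := by
  have h2 : (0.6931471803:ℝ) < Real.log 2 := Real.log_two_gt_d9
  have hlog2pos : (0:ℝ) < Real.log 2 := by linarith
  set t : ℝ := 1 / Real.log 2 with ht
  have ht0 : 0 < t := by positivity
  have htub : t < 1.4429 := by
    rw [ht, div_lt_iff₀ hlog2pos]
    nlinarith
  have hst : Real.sqrt t ≤ 1.20121 := by
    have h : t ≤ (1.20121:ℝ)^2 := by nlinarith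
    calc Real.sqrt t ≤ Real.sqrt ((1.20121:ℝ)^2) := Real.sqrt_le_sqrt h
      _ = 1.20121 := Real.sqrt_sq (by norm_num)
  have hu : Real.sqrt (Real.sqrt t) ≤ 1.09601 := by
    calc Real.sqrt (Real.sqrt t) ≤ Real.sqrt ((1.09601:ℝ)^2) := by
          apply Real.sqrt_le_sqrt; nlinarith
      _ = 1.09601 := Real.sqrt_sq (by norm_num)
  have hu0 : 0 < Real.sqrt (Real.sqrt t) := Real.sqrt_pos.mpr (Real.sqrt_pos.mpr ht0)
  have hlogt : Real.log t = 4 * Real.log (Real.sqrt (Real.sqrt t)) := by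
    rw [Real.log_sqrt (Real.sqrt_nonneg t), Real.log_sqrt ht0.le]; ring
  have hlogu : Real.log (Real.sqrt (Real.sqrt t)) ≤ 0.09601 := by
    have := Real.log_le_sub_one_of_pos hu0
    linarith
  have hloglog : Real.log (Real.log 2) ≥ -0.38404 := by
    have hinv : Real.log t = - Real.log (Real.log 2) := by
      rw [ht, one_div, Real.log_inv]
    linarith
  have hsum : (∑ k ∈ Finset.Icc (2:ℕ) 16, (1:ℝ)/k) < 2.38073 := by
    rw [show Finset.Icc (2:ℕ) 16
        = (Finset.range 15).map ⟨fun i => i + 2, add_left_injective 2⟩ from by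
      ext i
      simp only [Finset.mem_map, Finset.mem_range, Finset.mem_Icc, Function.Embedding.coeFn_mk]
      constructor
      · rintro ⟨h1, h2⟩; exact ⟨i - 2, by omega, by omega⟩
      · rintro ⟨a, ha, rfl⟩; omega]
    rw [Finset.sum_map]
    simp only [Function.Embedding.coeFn_mk]
    norm_num [Finset.sum_range_succ]
  linarith

end Aux

theorem sum_theta_gt_psi_sub :
    ∃ z₀ : ℕ, ∀ z : ℕ, z₀ ≤ z → ∀ K : ℕ, K = ⌊Real.log z / Real.log 2⌋₊ →
      ∀ y : ℕ → ℝ, y 1 = (z : ℝ) →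
        (∀ k, 2 ≤ k → k ≤ K → 0 < y k ∧ ∑ i ∈ Finset.Icc 1 k, (y k) ^ i = (z : ℝ)) →
        ∑ k ∈ Finset.Icc 1 K, chebyshevTheta (y k) >
          chebyshevPsi z - Real.log z * Real.log (Real.log z) := by
  refine ⟨65536, fun z hz K hKdef y hy1 hy2 => ?_⟩
  have hz2 : 2 ≤ z := by omega
  have hz1 : 1 ≤ z := by omega
  have hl2 : (0:ℝ) < Real.log 2 := Real.log_pos (by norm_num)
  have hzc : (65536:ℝ) ≤ (z:ℝ) := by exact_mod_cast hz
  have hlz16 : 16 * Real.log 2 ≤ Real.log z := by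
    calc 16 * Real.log 2 = Real.log ((2:ℝ)^16) := by rw [Real.log_pow]; norm_num
      _ ≤ Real.log z := Real.log_le_log (by positivity) (by norm_num at hzc ⊢; linarith)
  have hlz : (0:ℝ) < Real.log z := by linarith
  have hK16 : 16 ≤ K := by
    rw [hKdef]
    apply Nat.le_floor
    rw [le_div_iff₀ hl2]
    push_cast
    linarith
  -- K ≤ log z / log 2
  have hKle : (K:ℝ) ≤ Real.log z / Real.log 2 := by
    rw [hKdef]
    exact Nat.floor_le (by positivity)
  -- ψ z ≤ ∑ θ(y k) + (∑ 1/k) * log z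
  have hins : Finset.Icc 1 K = insert 1 (Finset.Icc 2 K) := by
    ext i; simp only [Finset.mem_Icc, Finset.mem_insert]; omega
  have hnot : (1:ℕ) ∉ Finset.Icc 2 K := by simp
  have hψ : chebyshevPsi z ≤ ∑ k ∈ Finset.Icc 1 K, chebyshevTheta (y k) +
      (∑ k ∈ Finset.Icc (2:ℕ) K, (1:ℝ)/k) * Real.log z := by
    rw [psi_eq_sum_theta z hz2, ← hKdef, hins, Finset.sum_insert hnot, Finset.sum_insert hnot]
    have hx1y1 : chebyshevTheta ((z:ℝ)^(1/((1:ℕ):ℝ))) = chebyshevTheta (y 1) := by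
      rw [hy1]; norm_num
    have hsum2 : ∑ k ∈ Finset.Icc (2:ℕ) K, chebyshevTheta ((z:ℝ)^(1/(k:ℝ))) ≤
        ∑ k ∈ Finset.Icc (2:ℕ) K, chebyshevTheta (y k) +
          (∑ k ∈ Finset.Icc (2:ℕ) K, (1:ℝ)/k) * Real.log z := by
      rw [Finset.sum_mul, ← Finset.sum_add_distrib]
      apply Finset.sum_le_sum
      intro k hk
      rw [Finset.mem_Icc] at hk
      obtain ⟨hyk0, hyks⟩ := hy2 k hk.1 hk.2
      have hk1 : 1 ≤ k := by omega
      have hxx1 : (1:ℝ) ≤ (z:ℝ)^(1/(k:ℝ)) :=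
        Real.one_le_rpow (by exact_mod_cast hz1) (by positivity)
      have hth := theta_diff_le hxx1 (y_le_x hk1 hyk0 hyks) (x_lt_y hz1 hk1 hyk0 hyks)
      have hlx : Real.log ((z:ℝ)^(1/(k:ℝ))) = 1/(k:ℝ) * Real.log z :=
        Real.log_rpow (by positivity) _
      linarith
    linarith
  -- harmonic bound
  have hharm := harmonic_tail K hK16
  have hlogK : Real.log K ≤ Real.log (Real.log z) - Real.log (Real.log 2) := by
    calc Real.log K ≤ Real.log (Real.log z / Real.log 2) :=
          Real.log_le_log (by exact_mod_cast (by omega : 0 < K)) hKle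
      _ = Real.log (Real.log z) - Real.log (Real.log 2) :=
          Real.log_div hlz.ne' hl2.ne'
  have h16 : Real.log (16:ℝ) = 4 * Real.log 2 := by
    rw [show (16:ℝ) = 2^4 by norm_num, Real.log_pow]
    norm_num
  have hs : (∑ k ∈ Finset.Icc (2:ℕ) K, (1:ℝ)/k) < Real.log (Real.log z) := by
    have hnk := numeric_key
    rw [h16] at hharm
    linarith
  have hmul : (∑ k ∈ Finset.Icc (2:ℕ) K, (1:ℝ)/k) * Real.log z <
      Real.log (Real.log z) * Real.log z := mul_lt_mul_of_pos_right hs hlz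
  have : Real.log z * Real.log (Real.log z) = Real.log (Real.log z) * Real.log z := by ring
  linarith
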